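/- Suppose that for every n, every hermitian or skew-hermitian matrix A ∈ M_n(F[t]) is congruent to a block-diagonal matrix whose diagonal blocks are 1×1 matrices and 2×2 matrices with zero diagonal. Then the norm map of F[t] is surjective onto F[t²]: for every a ∈ F[t²] there exists z ∈ F[t] with a = z z*. -/

import Mathlib

open Polynomial

/-- The involution of `F[t]` fixing `F` and sending `t ↦ -t`. -/
noncomputable def pstar {F : Type*} [Field F] (p : F[X]) : F[X] := p.comp (-X)

/-- The induced involution on matrices: transpose composed with entrywise `pstar`. -/
noncomputable def mstar {F : Type*} [Field F] {n : ℕ}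
    (A : Matrix (Fin n) (Fin n) F[X]) : Matrix (Fin n) (Fin n) F[X] :=
  Matrix.of fun i j => pstar (A j i)

/-- `A` and `B` are congruent if `B = S* A S` for some `S ∈ GL_n(F[t])`. -/
def PolyCongruent {F : Type*} [Field F] {n : ℕ}
    (A B : Matrix (Fin n) (Fin n) F[X]) : Prop :=
  ∃ S : Matrix (Fin n) (Fin n) F[X], IsUnit S.det ∧ B = mstar S * A * S

/-- `B` is block diagonal with diagonal blocks that are `1×1` matrices and
`2×2` matrices with zero diagonal: there is an involution `σ` of the indices
pairing each index either with itself (a `1×1` block) or with an adjacent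
index (a `2×2` block), all entries outside the blocks vanish, and the
diagonal entries of the `2×2` blocks vanish. -/
def IsBlkDiag12 {F : Type*} [Field F] {n : ℕ}
    (B : Matrix (Fin n) (Fin n) F[X]) : Prop :=
  ∃ σ : Equiv.Perm (Fin n),
    (∀ i, σ (σ i) = i) ∧
    (∀ i, σ i = i ∨ (σ i : ℕ) = (i : ℕ) + 1 ∨ (i : ℕ) = (σ i : ℕ) + 1) ∧
    (∀ i j, j ≠ i → j ≠ σ i → B i j = 0) ∧
    (∀ i, σ i ≠ i → B i i = 0)

section aux

variable {F : Type*} [Field F]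

lemma pstar_eq_ringHom (p : F[X]) : pstar p = eval₂RingHom C (-X) p := rfl

lemma pstar_mul (p q : F[X]) : pstar (p * q) = pstar p * pstar q := mul_comp p q _
lemma pstar_add (p q : F[X]) : pstar (p + q) = pstar p + pstar q := add_comp
lemma pstar_one : pstar (1 : F[X]) = 1 := one_comp
lemma pstar_C (a : F) : pstar (C a) = C a := C_comp
lemma pstar_X : pstar (X : F[X]) = -X := X_comp
lemma pstar_neg (p : F[X]) : pstar (-p) = -pstar p := neg_comp
lemma pstar_pstar (p : F[X]) : pstar (pstar p) = p := by
  simp [pstar, comp_assoc, neg_comp, X_comp, comp_X]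

lemma pstar_eval_zero (p : F[X]) : (pstar p).eval 0 = p.eval 0 := by
  simp [pstar, eval_comp]

lemma pstar_monomial (n : ℕ) (a : F) :
    pstar (monomial n a : F[X]) = C ((-1)^n * a) * X^n := by
  calc pstar (monomial n a : F[X]) = C a * (-X)^n := monomial_comp n
  _ = C ((-1)^n * a) * X^n := by
      rw [neg_pow, _root_.map_mul, map_pow, map_neg, _root_.map_one]; ring

lemma pstar_coeff (p : F[X]) (k : ℕ) : (pstar p).coeff k = (-1)^k * p.coeff k := by
  induction p using Polynomial.induction_on' with
  | add p q hp hq => simp [pstar_add, hp, hq, mul_add]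
  | monomial n a =>
      rw [pstar_monomial]
      rw [coeff_C_mul, coeff_X_pow, coeff_monomial]
      by_cases h : k = n
      · subst h; simp
      · simp [h, Ne.symm h]

lemma pstar_natDegree (p : F[X]) : (pstar p).natDegree = p.natDegree := by
  simp [pstar, natDegree_comp]

lemma mstar_mul {n : ℕ} (M N : Matrix (Fin n) (Fin n) F[X]) :
    mstar (M * N) = mstar N * mstar M := by
  apply Matrix.ext; intro i j
  show pstar (∑ k, M j k * N k i) = ∑ k, mstar N i k * mstar M k j
  rw [pstar_eq_ringHom, map_sum]
  apply Finset.sum_congr rfl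
  intro k _
  show pstar (M j k * N k i) = pstar (N k i) * pstar (M j k)
  rw [pstar_mul]; ring

lemma mstar_mstar {n : ℕ} (M : Matrix (Fin n) (Fin n) F[X]) : mstar (mstar M) = M := by
  apply Matrix.ext; intro i j
  show pstar (pstar (M i j)) = M i j
  exact pstar_pstar _

lemma det_mstar {n : ℕ} (M : Matrix (Fin n) (Fin n) F[X]) :
    (mstar M).det = pstar M.det := by
  have h1 : mstar M = (M.map (fun p => pstar p)).transpose := by
    apply Matrix.ext; intro i j
    simp [mstar, Matrix.map_apply, Matrix.transpose_apply]
  rw [h1, Matrix.det_transpose]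
  have h2 : M.map (fun p => pstar p) = M.map (eval₂RingHom C (-X)) := by
    apply Matrix.ext; intro i j; simp [Matrix.map_apply, pstar_eq_ringHom]
  rw [h2, ← RingHom.mapMatrix_apply, ← RingHom.map_det, pstar_eq_ringHom]

lemma norm_key (h2 : (2 : F) ≠ 0)
    (hK : ∀ (n : ℕ) (A : Matrix (Fin n) (Fin n) F[X]),
      (mstar A = A ∨ mstar A = -A) →
      ∃ B : Matrix (Fin n) (Fin n) F[X], PolyCongruent A B ∧ IsBlkDiag12 B)
    (w : F[X]) (hw : pstar w = w) :
    ∃ z : F[X], 1 + X^2 * w = z * pstar z := by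
  set A : Matrix (Fin 2) (Fin 2) F[X] := !![X * w, 1; -1, X] with hA
  have hskew : mstar A = -A := by
    apply Matrix.ext; intro i j
    fin_cases i <;> fin_cases j <;>
      · show pstar _ = _
        simp [hA, pstar_mul, pstar_X, pstar_one, pstar_neg, hw]
  obtain ⟨B, ⟨S, hS, hB⟩, σ, hσ2, _, hoff, hdiag⟩ := hK 2 A (Or.inr hskew)
  have hdetA : A.det = 1 + X^2 * w := by
    rw [hA, Matrix.det_fin_two_of]; ring
  have hBskew : ∀ i j, pstar (B j i) = -(B i j) := by
    have h : mstar B = -B := by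
      rw [hB, mstar_mul, mstar_mul, mstar_mstar, hskew]
      simp [Matrix.neg_mul, Matrix.mul_neg, mul_assoc]
    intro i j
    rw [← Matrix.ext_iff] at h
    simpa [mstar] using h i j
  have hdetB : B.det = pstar S.det * A.det * S.det := by
    rw [hB, Matrix.det_mul, Matrix.det_mul, det_mstar]
  have h01 : ∀ x : Fin 2, x = 0 ∨ x = 1 := by decide
  rcases h01 (σ 0) with h0 | h0
  · -- diagonal case: impossible
    exfalso
    have hσ1 : σ 1 = 1 := by
      rcases h01 (σ 1) with h1 | h1
      · exfalso
        have h' := hσ2 1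
        rw [h1, h0] at h'
        exact absurd h' (by decide)
      · exact h1
    have hB01 : B 0 1 = 0 := hoff 0 1 (by decide) (by rw [h0]; decide)
    have hB10 : B 1 0 = 0 := hoff 1 0 (by decide) (by rw [hσ1]; decide)
    have e00 : (B 0 0).eval 0 = 0 := by
      have h := congrArg (Polynomial.eval 0) (hBskew 0 0)
      rw [pstar_eval_zero, eval_neg] at h
      have h2' : (2 : F) * (B 0 0).eval 0 = 0 := by linear_combination h
      exact (mul_eq_zero.mp h2').resolve_left h2
    have hdB : (B.det).eval 0 = 0 := by
      rw [Matrix.det_fin_two, hB01, hB10]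
      simp [e00]
    have hu : IsUnit ((S.det).eval 0) := by
      simpa [coe_evalRingHom] using hS.map (evalRingHom (0 : F))
    rw [hdetB, hdetA] at hdB
    rw [eval_mul, eval_mul, pstar_eval_zero] at hdB
    have h1 : ((1 : F[X]) + X^2 * w).eval 0 = 1 := by simp
    rw [h1, mul_one] at hdB
    rcases mul_eq_zero.mp hdB with h | h
    · exact hu.ne_zero h
    · exact hu.ne_zero h
  · -- antidiagonal case
    have hσ1 : σ 1 = 0 := by
      have h' := hσ2 0
      rw [h0] at h'
      exact h'
    have hB00 : B 0 0 = 0 := hdiag 0 (by rw [h0]; decide)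
    have hB11 : B 1 1 = 0 := hdiag 1 (by rw [hσ1]; decide)
    have h10 : B 1 0 = -pstar (B 0 1) := by
      have h := hBskew 1 0
      linear_combination h
    have hdB : B.det = B 0 1 * pstar (B 0 1) := by
      rw [Matrix.det_fin_two, hB00, hB11, h10]; ring
    obtain ⟨u, hu, hCu⟩ := Polynomial.isUnit_iff.mp hS
    have hune : u ≠ 0 := hu.ne_zero
    refine ⟨C u⁻¹ * B 0 1, ?_⟩
    have key : B 0 1 * pstar (B 0 1) = C u * (1 + X^2*w) * C u := by
      rw [← hdB, hdetB, hdetA, ← hCu, pstar_C]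
    rw [pstar_mul, pstar_C]
    calc 1 + X^2*w = (C u⁻¹ * C u) * ((C u⁻¹ * C u)) * (1 + X^2*w) := by
          rw [← C_mul, inv_mul_cancel₀ hune]; simp
    _ = C u⁻¹ * C u⁻¹ * (C u * (1 + X^2*w) * C u) := by ring
    _ = C u⁻¹ * C u⁻¹ * (B 0 1 * pstar (B 0 1)) := by rw [key]
    _ = C u⁻¹ * B 0 1 * (C u⁻¹ * pstar (B 0 1)) := by ring

lemma pstar_sub (p q : F[X]) : pstar (p - q) = pstar p - pstar q := sub_comp
lemma pstar_zero : pstar (0 : F[X]) = 0 := zero_comp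
lemma pstar_X_sq : pstar (X^2 : F[X]) = X^2 := by
  rw [pstar, pow_comp, X_comp]; ring

lemma exists_sq (h2 : (2 : F) ≠ 0)
    (hK : ∀ (n : ℕ) (A : Matrix (Fin n) (Fin n) F[X]),
      (mstar A = A ∨ mstar A = -A) →
      ∃ B : Matrix (Fin n) (Fin n) F[X], PolyCongruent A B ∧ IsBlkDiag12 B)
    (δ : F) : ∃ f : F, δ = f^2 := by
  by_cases hδ : δ = 0
  · exact ⟨0, by simp [hδ]⟩
  obtain ⟨z, hz⟩ := norm_key h2 hK (C (-δ)) (pstar_C _)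
  set p : F[X] := 1 + X^2 * C (-δ) with hp
  have hc2 : p.coeff 2 = -δ := by
    simp [hp, coeff_add, mul_comm (X^2 : F[X]) (C (-δ)), coeff_C_mul, coeff_X_pow,
      coeff_one]
  have hpne : p ≠ 0 := by
    intro h
    rw [h, coeff_zero] at hc2
    exact hδ (by linear_combination hc2)
  have hdeg2 : p.natDegree = 2 := by
    have hp2 : p = C (-δ) * X^2 + C 0 * X + C 1 := by
      rw [hp, map_zero, map_one]; ring
    rw [hp2]
    exact natDegree_quadratic (neg_ne_zero.mpr hδ)
  have hz1 : z ≠ 0 := fun h => hpne (by rw [hz, h, zero_mul])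
  have hz2 : pstar z ≠ 0 := fun h => hpne (by rw [hz, h, mul_zero])
  have hdz : z.natDegree = 1 := by
    have hm := natDegree_mul hz1 hz2
    rw [← hz, hdeg2, pstar_natDegree] at hm
    omega
  obtain ⟨a, b, hab⟩ := exists_eq_X_add_C_of_natDegree_le_one (le_of_eq hdz)
  have hps : pstar z = C a * (-X) + C b := by
    rw [hab, pstar_add, pstar_mul, pstar_C, pstar_C, pstar_X]
  have hexp : p = C (b*b) - C (a*a) * X^2 := by
    rw [hz, hps, hab, C_mul, C_mul]; ring
  have hc2' : p.coeff 2 = -(a*a) := by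
    rw [hexp, coeff_sub, coeff_C_mul, coeff_X_pow, coeff_C]
    norm_num
  refine ⟨a, ?_⟩
  have h := hc2.symm.trans hc2'
  rw [pow_two]
  linear_combination -h

lemma branch_const (h2 : (2 : F) ≠ 0)
    (hK : ∀ (n : ℕ) (A : Matrix (Fin n) (Fin n) F[X]),
      (mstar A = A ∨ mstar A = -A) →
      ∃ B : Matrix (Fin n) (Fin n) F[X], PolyCongruent A B ∧ IsBlkDiag12 B)
    (a : F[X]) (ha : pstar a = a) (h0 : a.coeff 0 ≠ 0) :
    ∃ z : F[X], a = z * pstar z := by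
  obtain ⟨f, hf⟩ := exists_sq h2 hK (a.coeff 0)
  set δ := a.coeff 0 with hδ
  set v : F[X] := C δ⁻¹ * a with hv
  have hva : a = C δ * v := by
    rw [hv, ← mul_assoc, ← C_mul, mul_inv_cancel₀ h0, map_one, one_mul]
  have hpv : pstar v = v := by rw [hv, pstar_mul, pstar_C, ha]
  have hv0 : v.coeff 0 = 1 := by rw [hv, coeff_C_mul]; exact inv_mul_cancel₀ h0
  have hv1 : v.coeff 1 = 0 := by
    have hcv := pstar_coeff v 1
    rw [hpv] at hcv
    have h2' : (2:F) * v.coeff 1 = 0 := by linear_combination hcv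
    exact (mul_eq_zero.mp h2').resolve_left h2
  have hdvd : X^2 ∣ v - 1 := by
    rw [X_pow_dvd_iff]
    intro d hd
    interval_cases d
    · simp [coeff_sub, hv0, coeff_one]
    · simp [coeff_sub, hv1, coeff_one]
  obtain ⟨w, hw⟩ := hdvd
  have hpw : pstar w = w := by
    have h' : pstar (v - 1) = v - 1 := by rw [pstar_sub, hpv, pstar_one]
    rw [hw, pstar_mul, pstar_X_sq] at h'
    exact mul_left_cancel₀ (pow_ne_zero 2 X_ne_zero) h'
  obtain ⟨z₀, hz₀⟩ := norm_key h2 hK w hpw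
  refine ⟨C f * z₀, ?_⟩
  have hv' : v = 1 + X^2 * w := by linear_combination hw
  rw [pstar_mul, pstar_C]
  calc a = C δ * v := hva
  _ = C (f^2) * (1 + X^2*w) := by rw [← hf, hv']
  _ = C f * z₀ * (C f * pstar z₀) := by rw [hz₀, pow_two, C_mul]; ring

end aux

/-- If (for every `n`) every hermitian or skew-hermitian matrix over `F[t]`
(`char F ≠ 2`) is congruent to a direct sum of `1×1` matrices and `2×2`
matrices with zero diagonal, then the norm map `x ↦ x x*` of `F[t]` is onto
the fixed ring `F[t²]`. -/
theorem kac_implies_norm_surjective {F : Type*} [Field F] (h2 : (2 : F) ≠ 0)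
    (hK : ∀ (n : ℕ) (A : Matrix (Fin n) (Fin n) F[X]),
      (mstar A = A ∨ mstar A = -A) →
      ∃ B : Matrix (Fin n) (Fin n) F[X], PolyCongruent A B ∧ IsBlkDiag12 B) :
    ∀ a : F[X], pstar a = a → ∃ z : F[X], a = z * pstar z := by
  obtain ⟨i, hi⟩ := exists_sq h2 hK (-1 : F)
  suffices H : ∀ (n : ℕ) (a : F[X]), a.natDegree ≤ n → pstar a = a →
      ∃ z : F[X], a = z * pstar z by
    intro a ha
    exact H a.natDegree a le_rfl ha
  intro n
  induction n with
  | zero =>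
      intro a hdeg ha
      by_cases h0 : a.coeff 0 = 0
      · refine ⟨0, ?_⟩
        rw [eq_C_of_natDegree_le_zero hdeg, h0, map_zero, zero_mul]
      · exact branch_const h2 hK a ha h0
  | succ n ih =>
      intro a hdeg ha
      by_cases haz : a = 0
      · exact ⟨0, by rw [haz, zero_mul]⟩
      by_cases h0 : a.coeff 0 = 0
      · -- X^2 divides a
        have hc1 : a.coeff 1 = 0 := by
          have hca := pstar_coeff a 1
          rw [ha] at hca
          have h2' : (2:F) * a.coeff 1 = 0 := by linear_combination hca
          exact (mul_eq_zero.mp h2').resolve_left h2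
        have hdvd : X^2 ∣ a := by
          rw [X_pow_dvd_iff]
          intro d hd
          interval_cases d
          · exact h0
          · exact hc1
        obtain ⟨b, hb⟩ := hdvd
        have hbne : b ≠ 0 := by
          intro h
          exact haz (by rw [hb, h, mul_zero])
        have hpb : pstar b = b := by
          have h' : pstar a = X^2 * pstar b := by rw [hb, pstar_mul, pstar_X_sq]
          rw [ha, hb] at h'
          exact (mul_left_cancel₀ (pow_ne_zero 2 X_ne_zero) h').symm
        have hdegb : b.natDegree ≤ n := by
          have hm := natDegree_mul (pow_ne_zero 2 (X_ne_zero (R := F))) hbne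
          rw [← hb, natDegree_X_pow] at hm
          omega
        obtain ⟨z, hzb⟩ := ih b hdegb hpb
        refine ⟨C i * X * z, ?_⟩
        rw [pstar_mul, pstar_mul, pstar_C, pstar_X]
        have hii : (C i : F[X]) * C i = -1 := by
          rw [← C_mul, ← pow_two, ← hi, map_neg, map_one]
        calc a = X^2 * (z * pstar z) := by rw [hb, hzb]
        _ = (C i * C i) * -(X^2) * (z * pstar z) := by rw [hii]; ring
        _ = C i * X * z * (C i * -X * pstar z) := by ring
      · exact branch_const h2 hK a ha h0
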